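/- (Correctness of the forward-sweep update.) Let Δ ≥ 0 and a ≤ b be reals, and let A be a finite set of pairs (a',b') of reals with a' ≤ b' for each pair, such that every (a',b') ∈ A satisfies b' < a or a' > b (each interval [a',b'] is disjoint from [a,b]). Suppose the set B = {b' : (a',b') ∈ A and b' < a} is nonempty and let b* = max B. Then for every l ∈ [a,b], the following are equivalent: (1) there exist (a',b') ∈ A and l' ∈ [a',b'] with l − Δ ≤ l' ≤ l; (2) l ≤ b* + Δ. -/

import Mathlib

/-- correctness of the forward-sweep update. For an interval [a,b] and a
finite family A of closed intervals each disjoint from [a,b], with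
B = {b' : (a',b') ∈ A, b' < a} nonempty and b* = max B, a point l ∈ [a,b] can be reached
from some point of some interval of A within forward travel budget Δ iff l ≤ b* + Δ. -/
theorem forward_sweep_update_correct
    (Δ a b : ℝ) (hΔ : 0 ≤ Δ) (hab : a ≤ b)
    (A : Finset (ℝ × ℝ)) (hA : ∀ p ∈ A, p.1 ≤ p.2)
    (hdisj : ∀ p ∈ A, p.2 < a ∨ b < p.1)
    (hB : ((A.filter fun p => p.2 < a).image Prod.snd).Nonempty) :
    ∀ l : ℝ, a ≤ l → l ≤ b →
      ((∃ p ∈ A, ∃ l' : ℝ, p.1 ≤ l' ∧ l' ≤ p.2 ∧ l - Δ ≤ l' ∧ l' ≤ l) ↔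
        l ≤ Finset.max' _ hB + Δ) := by
  intro l hal hlb
  set bs := ((A.filter fun p => p.2 < a).image Prod.snd).max' hB with hbs
  constructor
  · rintro ⟨p, hp, l', h1, h2, h3, h4⟩
    have hp2 : p.2 < a := by
      rcases hdisj p hp with h | h
      · exact h
      · linarith [h1, h4, hlb]
    have hmem : p.2 ∈ (A.filter fun p => p.2 < a).image Prod.snd :=
      Finset.mem_image_of_mem _ (Finset.mem_filter.mpr ⟨hp, hp2⟩)
    have := Finset.le_max' _ _ hmem
    linarith
  · intro hl
    have hmem : bs ∈ (A.filter fun p => p.2 < a).image Prod.snd :=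
      Finset.max'_mem _ hB
    obtain ⟨p, hp, hpb⟩ := Finset.mem_image.mp hmem
    obtain ⟨hpA, hp2⟩ := Finset.mem_filter.mp hp
    exact ⟨p, hpA, p.2, hA p hpA, le_refl _, by linarith [hpb.symm ▸ hl],
      by rw [hpb]; linarith⟩
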